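/- The trace norm ‖A‖₁ = Tr(|A|) on M_n(ℂ) is an L-norm: for every A ∈ M_n(ℂ) and all C₁,…,C_k with ∑ᵢ Cᵢ*Cᵢ = I, one has ∑ᵢ ‖CᵢACᵢ*‖₁ ≤ ‖A‖₁. -/

import Mathlib

open Matrix BigOperators ComplexOrder

/-- Square complex matrices. -/
abbrev Mat (n : ℕ) := Matrix (Fin n) (Fin n) ℂ

/-- `N` is a norm on `Mat n`. -/
def IsMatrixNorm {n : ℕ} (N : Mat n → ℝ) : Prop :=
  (∀ A, N A = 0 ↔ A = 0) ∧
  (∀ (c : ℂ) (A : Mat n), N (c • A) = ‖c‖ * N A) ∧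
  (∀ A B : Mat n, N (A + B) ≤ N A + N B)

/-- A set of matrices is C*-convex. -/
def CStarConvex {n : ℕ} (K : Set (Mat n)) : Prop :=
  ∀ (k : ℕ) (C A : Fin k → Mat n), (∀ i, A i ∈ K) →
    (∑ i, (C i)ᴴ * C i = 1) → (∑ i, (C i)ᴴ * A i * C i) ∈ K

/-- `N` is an M-norm. -/
def IsMNorm {n : ℕ} (N : Mat n → ℝ) : Prop :=
  ∀ (k : ℕ) (C X : Fin k → Mat n), (∑ i, (C i)ᴴ * C i = 1) →
    N (∑ i, (C i)ᴴ * X i * C i) ≤ ⨆ i, N (X i)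

/-- `N` is an L-norm. -/
def IsLNorm {n : ℕ} (N : Mat n → ℝ) : Prop :=
  ∀ (k : ℕ) (C : Fin k → Mat n) (X : Mat n), (∑ i, (C i)ᴴ * C i = 1) →
    ∑ i, N (C i * X * (C i)ᴴ) ≤ N X

/-- The dual norm with respect to the pairing `⟨Y|X⟩ = Tr(Yᴴ X)`. -/
noncomputable def dualNorm {n : ℕ} (N : Mat n → ℝ) (Y : Mat n) : ℝ :=
  sSup {r | ∃ X : Mat n, N X ≤ 1 ∧ r = ‖(Yᴴ * X).trace‖}

/-- The operator (spectral) norm of a matrix. -/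
noncomputable def opNorm {n : ℕ} (A : Mat n) : ℝ :=
  ‖Matrix.toEuclideanCLM (𝕜 := ℂ) (n := Fin n) A‖

/-- The trace norm `‖A‖₁ = Tr((AᴴA)^{1/2})`. -/
noncomputable def traceNorm {n : ℕ} (A : Mat n) : ℝ :=
  ((Matrix.posSemidef_conjTranspose_mul_self A).1.eigenvectorUnitary.1 *
    diagonal ((fun x : ℝ => (x : ℂ)) ∘ Real.sqrt ∘ (Matrix.posSemidef_conjTranspose_mul_self A).1.eigenvalues) *
    (star (Matrix.posSemidef_conjTranspose_mul_self A).1.eigenvectorUnitary : Mat n)).trace.re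

/-- The numerical radius. -/
noncomputable def numRadius {n : ℕ} (A : Mat n) : ℝ :=
  sSup {r | ∃ x : EuclideanSpace ℂ (Fin n), ‖x‖ = 1 ∧
    r = ‖inner ℂ x (Matrix.toEuclideanCLM (𝕜 := ℂ) (n := Fin n) A x)‖}


lemma diag_conj {n : ℕ} (U M : Mat n) (j : Fin n) :
    (Uᴴ * M * U) j j = star (fun a => U a j) ⬝ᵥ (M *ᵥ fun a => U a j) := by
  simp [Matrix.mul_apply, Matrix.mulVec, dotProduct, Matrix.conjTranspose_apply,
    Finset.mul_sum, Finset.sum_mul]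
  rw [Finset.sum_comm]
  congr 1; ext a; congr 1; ext b; ring

lemma trace_eq_sum_basis {n : ℕ} {P : Mat n} (hP : P.IsHermitian) (M : Mat n) :
    M.trace = ∑ j, star ⇑(hP.eigenvectorBasis j) ⬝ᵥ (M *ᵥ ⇑(hP.eigenvectorBasis j)) := by
  have hU : (hP.eigenvectorUnitary : Mat n) * (star (hP.eigenvectorUnitary : Mat n)) = 1 :=
    Unitary.mul_star_self_of_mem (hP.eigenvectorUnitary).2
  have h1 : M.trace
      = ((hP.eigenvectorUnitary : Mat n)ᴴ * M * (hP.eigenvectorUnitary : Mat n)).trace := by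
    rw [Matrix.trace_mul_cycle, ← Matrix.star_eq_conjTranspose, hU, one_mul]
  rw [h1, Matrix.trace]
  apply Finset.sum_congr rfl
  intro j _
  rw [Matrix.diag_apply, diag_conj]
  congr 1

lemma clm_apply {n : ℕ} (A : Mat n) (v : EuclideanSpace ℂ (Fin n)) :
    Matrix.toEuclideanCLM (𝕜 := ℂ) A v = (WithLp.equiv 2 _).symm (A *ᵥ (WithLp.equiv 2 _ v)) :=
  rfl

lemma inner_eq {n : ℕ} (u w : EuclideanSpace ℂ (Fin n)) :
    (inner ℂ u w : ℂ) = star (WithLp.equiv 2 _ u) ⬝ᵥ (WithLp.equiv 2 _ w) := by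
  rw [EuclideanSpace.inner_eq_star_dotProduct, dotProduct_comm]; rfl

lemma norm_clm_sq {n : ℕ} (A : Mat n) (v : EuclideanSpace ℂ (Fin n)) :
    ‖Matrix.toEuclideanCLM (𝕜 := ℂ) A v‖ ^ 2
      = Complex.re (star (WithLp.equiv 2 _ v) ⬝ᵥ ((Aᴴ * A) *ᵥ (WithLp.equiv 2 _ v))) := by
  rw [← inner_self_eq_norm_sq (𝕜 := ℂ), inner_eq]
  simp only [WithLp.equiv_apply, Matrix.ofLp_toEuclideanCLM, Matrix.toLin'_apply, Matrix.star_mulVec,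
    ← Matrix.mulVec_mulVec, dotProduct_mulVec]
  rfl

noncomputable def sqrtm {n : ℕ} (X : Mat n) : Mat n :=
  (Matrix.posSemidef_conjTranspose_mul_self X).1.eigenvectorUnitary.1 *
    diagonal ((fun x : ℝ => (x : ℂ)) ∘ Real.sqrt ∘ (Matrix.posSemidef_conjTranspose_mul_self X).1.eigenvalues) *
    (star (Matrix.posSemidef_conjTranspose_mul_self X).1.eigenvectorUnitary : Mat n)

lemma sqrtm_psd {n : ℕ} (X : Mat n) : (sqrtm X).PosSemidef := by
  have := (Matrix.PosSemidef.diagonal (d := (fun x : ℝ => (x : ℂ)) ∘ Real.sqrt ∘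
    (Matrix.posSemidef_conjTranspose_mul_self X).1.eigenvalues)
    (fun i => Complex.zero_le_real.mpr (Real.sqrt_nonneg _))).mul_mul_conjTranspose_same
    ((Matrix.posSemidef_conjTranspose_mul_self X).1.eigenvectorUnitary : Mat n)
  exact this

noncomputable def hsq {n : ℕ} (X : Mat n) : (sqrtm X).IsHermitian := (sqrtm_psd X).1

noncomputable def sv {n : ℕ} (X : Mat n) : Fin n → ℝ := (hsq X).eigenvalues

noncomputable def eb {n : ℕ} (X : Mat n) : OrthonormalBasis (Fin n) ℂ (EuclideanSpace ℂ (Fin n)) :=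
  (hsq X).eigenvectorBasis

section Facts
variable {n : ℕ} (X : Mat n)

lemma sv_nonneg (j : Fin n) : 0 ≤ sv X j := (sqrtm_psd X).eigenvalues_nonneg j

lemma PP : sqrtm X * sqrtm X = Xᴴ * X := by
  have hP := Matrix.posSemidef_conjTranspose_mul_self X
  have hU := Unitary.star_mul_self_of_mem (hP.1.eigenvectorUnitary).2
  have hs := hP.1.spectral_theorem
  rw [Unitary.conjStarAlgAut_apply] at hs
  conv_rhs => rw [hs]
  unfold sqrtm
  simp only [Matrix.mul_assoc]
  rw [← Matrix.mul_assoc (star _), hU, Matrix.one_mul, ← Matrix.mul_assoc (diagonal _),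
    diagonal_mul_diagonal]
  congr 3
  funext j
  simp only [Function.comp_apply]
  rw [← Complex.ofReal_mul, Real.mul_self_sqrt (hP.eigenvalues_nonneg j)]
  rfl

lemma sqrtm_mulVec (j : Fin n) : sqrtm X *ᵥ ⇑(eb X j) = sv X j • ⇑(eb X j) :=
  (hsq X).mulVec_eigenvectorBasis j

lemma trace_eq' (M : Mat n) :
    M.trace = ∑ j, star ⇑(eb X j) ⬝ᵥ (M *ᵥ ⇑(eb X j)) :=
  trace_eq_sum_basis (hsq X) M

lemma dot_self_basis (j : Fin n) : star ⇑(eb X j) ⬝ᵥ ⇑(eb X j) = 1 := by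
  have h := (eb X).orthonormal.1 j
  have h2 : (inner ℂ (eb X j) (eb X j) : ℂ) = 1 := by
    rw [inner_self_eq_norm_sq_to_K, h]; norm_num
  rw [← h2, inner_eq]
  rfl

lemma traceNorm_eq_sum : traceNorm X = ∑ j, sv X j := by
  rw [show traceNorm X = (sqrtm X).trace.re from rfl, trace_eq' X]
  rw [Complex.re_sum]
  apply Finset.sum_congr rfl
  intro j _
  rw [sqrtm_mulVec, dotProduct_smul, dot_self_basis]
  simp

lemma norm_X_basis (j : Fin n) :
    ‖Matrix.toEuclideanCLM (𝕜 := ℂ) X (eb X j)‖ = sv X j := by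
  have h2 : ‖Matrix.toEuclideanCLM (𝕜 := ℂ) X (eb X j)‖ ^ 2 = (sv X j) ^ 2 := by
    rw [norm_clm_sq]
    have h5 : (Xᴴ * X) *ᵥ (WithLp.equiv 2 _ (eb X j)) = (sv X j * sv X j) • ⇑(eb X j) := by
      rw [← PP X, ← Matrix.mulVec_mulVec]
      show sqrtm X *ᵥ (sqrtm X *ᵥ ⇑(eb X j)) = _
      rw [sqrtm_mulVec, Matrix.mulVec_smul, sqrtm_mulVec, smul_smul]
    rw [h5, dotProduct_smul]
    show ((sv X j * sv X j) • (star ⇑(eb X j) ⬝ᵥ ⇑(eb X j))).re = _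
    rw [dot_self_basis]
    simp [pow_two]
  have h3 := norm_nonneg (Matrix.toEuclideanCLM (𝕜 := ℂ) X (eb X j))
  have h4 := sv_nonneg X j
  nlinarith [h2]

/-- Lemma A -/
lemma abs_trace_le (B : Mat n)
    (hB : ∀ u : EuclideanSpace ℂ (Fin n), ‖Matrix.toEuclideanCLM (𝕜 := ℂ) B u‖ ≤ ‖u‖) :
    ‖(B * X).trace‖ ≤ traceNorm X := by
  rw [trace_eq' X (B * X), traceNorm_eq_sum]
  refine le_trans (norm_sum_le _ _) (Finset.sum_le_sum ?_)
  intro j _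
  have key : star ⇑(eb X j) ⬝ᵥ ((B * X) *ᵥ ⇑(eb X j))
      = inner ℂ (eb X j) (Matrix.toEuclideanCLM (𝕜 := ℂ) B (Matrix.toEuclideanCLM (𝕜 := ℂ) X (eb X j))) := by
    rw [inner_eq]
    simp only [WithLp.equiv_apply, Matrix.ofLp_toEuclideanCLM, Matrix.toLin'_apply, Matrix.mulVec_mulVec]
  rw [key]
  calc ‖inner ℂ (eb X j) (Matrix.toEuclideanCLM (𝕜 := ℂ) B (Matrix.toEuclideanCLM (𝕜 := ℂ) X (eb X j)))‖
      ≤ ‖eb X j‖ * ‖Matrix.toEuclideanCLM (𝕜 := ℂ) B (Matrix.toEuclideanCLM (𝕜 := ℂ) X (eb X j))‖ :=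
        by exact norm_inner_le_norm _ _
    _ ≤ 1 * ‖Matrix.toEuclideanCLM (𝕜 := ℂ) X (eb X j)‖ := by
        refine mul_le_mul ?_ (hB _) (norm_nonneg _) zero_le_one
        rw [(eb X).orthonormal.1 j]
    _ = sv X j := by rw [one_mul, norm_X_basis]

end Facts
lemma sq_le_helper {a b : ℝ} (ha : 0 ≤ a) (hb : 0 ≤ b) (h : a ^ 2 ≤ a * b) : a ≤ b := by
  nlinarith

lemma sq_le_sq_helper {a b : ℝ} (ha : 0 ≤ a) (hb : 0 ≤ b) (h : a ^ 2 ≤ b ^ 2) : a ≤ b := by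
  nlinarith

lemma clm_conjTranspose {n : ℕ} (V : Mat n) :
    Matrix.toEuclideanCLM (𝕜 := ℂ) Vᴴ
      = ContinuousLinearMap.adjoint (Matrix.toEuclideanCLM (𝕜 := ℂ) V) := by
  rw [← ContinuousLinearMap.star_eq_adjoint, ← map_star]
  rfl

lemma norm_le_of_adjoint {n : ℕ} (V : Mat n)
    (h : ∀ u : EuclideanSpace ℂ (Fin n), ‖Matrix.toEuclideanCLM (𝕜 := ℂ) Vᴴ u‖ ≤ ‖u‖) :
    ∀ u : EuclideanSpace ℂ (Fin n), ‖Matrix.toEuclideanCLM (𝕜 := ℂ) V u‖ ≤ ‖u‖ := by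
  intro u
  set T := Matrix.toEuclideanCLM (𝕜 := ℂ) V with hT
  have hadj := clm_conjTranspose V
  refine sq_le_helper (norm_nonneg _) (norm_nonneg _) ?_
  have h1 : (‖T u‖ : ℝ) ^ 2 = RCLike.re (inner ℂ (T u) (T u) : ℂ) :=
    (inner_self_eq_norm_sq (𝕜 := ℂ) (T u)).symm
  have h2 : (inner ℂ (ContinuousLinearMap.adjoint T (T u)) u : ℂ) = inner ℂ (T u) (T u) :=
    ContinuousLinearMap.adjoint_inner_left T u (T u)
  rw [h1, ← h2]
  calc RCLike.re (inner ℂ (ContinuousLinearMap.adjoint T (T u)) u : ℂ)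
      ≤ ‖(inner ℂ (ContinuousLinearMap.adjoint T (T u)) u : ℂ)‖ := RCLike.re_le_norm _
    _ ≤ ‖ContinuousLinearMap.adjoint T (T u)‖ * ‖u‖ := norm_inner_le_norm _ _
    _ ≤ ‖T u‖ * ‖u‖ := by
        refine mul_le_mul_of_nonneg_right ?_ (norm_nonneg _)
        rw [← hadj] at *
        exact h (T u)

-- Lemma B section
section LemB
variable {n : ℕ} (X : Mat n)

lemma exists_dual (X : Mat n) : ∃ V : Mat n,
    (∀ u : EuclideanSpace ℂ (Fin n), ‖Matrix.toEuclideanCLM (𝕜 := ℂ) V u‖ ≤ ‖u‖) ∧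
    (V * X).trace = (traceNorm X : ℂ) := by
  classical
  set U : Mat n := ((hsq X).eigenvectorUnitary : Mat n) with hUdef
  have hU1 : Uᴴ * U = 1 := by
    rw [← Matrix.star_eq_conjTranspose]
    exact Unitary.star_mul_self_of_mem ((hsq X).eigenvectorUnitary).2
  have hU2 : U * Uᴴ = 1 := by
    rw [← Matrix.star_eq_conjTranspose]
    exact Unitary.mul_star_self_of_mem ((hsq X).eigenvectorUnitary).2
  have conj_mul : ∀ M N : Mat n, (U*M*Uᴴ)*(U*N*Uᴴ) = U*(M*N)*Uᴴ := by
    intro M N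
    simp only [Matrix.mul_assoc]
    rw [← Matrix.mul_assoc Uᴴ U, hU1, one_mul]
  have conj_trace : ∀ M : Mat n, (U*M*Uᴴ).trace = M.trace := by
    intro M
    rw [Matrix.trace_mul_cycle, hU1, one_mul]
  set D : Mat n := Matrix.diagonal (fun j => (sv X j : ℂ)) with hDdef
  have hspec : sqrtm X = U * D * Uᴴ := by
    have := (hsq X).spectral_theorem
    rw [Unitary.conjStarAlgAut_apply, Matrix.star_eq_conjTranspose] at this
    exact this
  have hXX : Xᴴ * X = U * (D * D) * Uᴴ := by
    rw [← PP X, hspec, conj_mul]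
  set d' : Fin n → ℂ := fun j => if sv X j = 0 then 0 else ((sv X j : ℂ))⁻¹ with hd'def
  set D' : Mat n := Matrix.diagonal d' with hD'def
  have hstar : star d' = d' := by
    funext j
    simp only [hd'def, Pi.star_apply]
    split_ifs
    · simp
    · rw [← Complex.ofReal_inv, RCLike.star_def, Complex.conj_ofReal]
  have hD'star : D'ᴴ = D' := by
    rw [hD'def, Matrix.diagonal_conjTranspose, hstar]
  set e : Fin n → ℂ := fun j => if sv X j = 0 then 0 else 1 with hedef
  refine ⟨U * D' * Uᴴ * Xᴴ, ?_, ?_⟩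
  · -- norm bound
    have hVT : (U * D' * Uᴴ * Xᴴ)ᴴ = X * (U * (D' * Uᴴ)) := by
      simp only [Matrix.conjTranspose_mul, Matrix.conjTranspose_conjTranspose, hD'star,
        Matrix.mul_assoc]
    have hVVH : (U * D' * Uᴴ * Xᴴ) * (U * D' * Uᴴ * Xᴴ)ᴴ = U * Matrix.diagonal e * Uᴴ := by
      calc (U * D' * Uᴴ * Xᴴ) * (U * D' * Uᴴ * Xᴴ)ᴴ
          = (U * D' * Uᴴ) * (Xᴴ * X) * (U * D' * Uᴴ) := by
            rw [hVT]; simp only [Matrix.mul_assoc]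
        _ = (U * D' * Uᴴ) * (U * (D * D) * Uᴴ) * (U * D' * Uᴴ) := by rw [hXX]
        _ = U * (D' * (D * D) * D') * Uᴴ := by rw [conj_mul, conj_mul]
        _ = U * Matrix.diagonal e * Uᴴ := by
            have : D' * (D * D) * D' = Matrix.diagonal e := by
              simp only [hD'def, hDdef, Matrix.diagonal_mul_diagonal]
              apply congrArg
              funext j
              by_cases h : sv X j = 0
              · simp [hd'def, hedef, h]
              · have hne : (sv X j : ℂ) ≠ 0 := by exact_mod_cast h
                simp only [hd'def, hedef, h, if_false, Pi.mul_apply]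
                field_simp
            rw [this]
    refine norm_le_of_adjoint _ ?_
    intro u
    refine sq_le_sq_helper (norm_nonneg _) (norm_nonneg _) ?_
    rw [norm_clm_sq, Matrix.conjTranspose_conjTranspose, hVVH]
    set v : Fin n → ℂ := WithLp.equiv 2 _ u with hv
    set w : Fin n → ℂ := Uᴴ *ᵥ v with hw
    have hsw : star v ᵥ* U = star w := by
      rw [hw, Matrix.star_mulVec, Matrix.conjTranspose_conjTranspose]
    have hrw : star v ⬝ᵥ ((U * Matrix.diagonal e * Uᴴ) *ᵥ v)
        = star w ⬝ᵥ (Matrix.diagonal e *ᵥ w) := by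
      rw [← Matrix.mulVec_mulVec, ← Matrix.mulVec_mulVec, dotProduct_mulVec, hsw, hw]
    rw [hrw]
    have hexp : star w ⬝ᵥ (Matrix.diagonal e *ᵥ w) = ∑ j, (starRingEnd ℂ) (w j) * (e j * w j) := by
      simp [dotProduct, Matrix.mulVec_diagonal]
    rw [hexp, Complex.re_sum]
    have hbound : ∑ j, ((starRingEnd ℂ) (w j) * (e j * w j)).re
        ≤ ∑ j, Complex.normSq (w j) := by
      refine Finset.sum_le_sum ?_
      intro j _
      by_cases h : sv X j = 0
      · simp [hedef, h, Complex.normSq_nonneg]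
      · simp only [hedef, h, if_false, one_mul]
        rw [← Complex.normSq_eq_conj_mul_self, Complex.ofReal_re]
    refine le_trans hbound ?_
    have h9 : star w ⬝ᵥ w = star v ⬝ᵥ v := by
      rw [hw, Matrix.star_mulVec, Matrix.conjTranspose_conjTranspose,
        ← dotProduct_mulVec, Matrix.mulVec_mulVec, hU2, Matrix.one_mulVec]
    have h8 : ∑ j, Complex.normSq (w j) = (star w ⬝ᵥ w).re := by
      rw [dotProduct, Complex.re_sum]
      apply Finset.sum_congr rfl
      intro j _
      rw [Pi.star_apply]
      rw [show (star (w j) : ℂ) = (starRingEnd ℂ) (w j) from rfl]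
      rw [← Complex.normSq_eq_conj_mul_self, Complex.ofReal_re]
    rw [h8, h9]
    have h10 : (inner ℂ u u : ℂ) = star v ⬝ᵥ v := inner_eq u u
    rw [← h10]
    rw [show ((inner ℂ u u : ℂ)).re = RCLike.re (inner ℂ u u : ℂ) from rfl,
      inner_self_eq_norm_sq (𝕜 := ℂ)]
  · -- trace
    have : (U * D' * Uᴴ * Xᴴ) * X = U * (D' * (D * D)) * Uᴴ := by
      rw [Matrix.mul_assoc (U * D' * Uᴴ), hXX, conj_mul]
    rw [this, conj_trace]
    simp only [hD'def, hDdef, Matrix.diagonal_mul_diagonal, Matrix.trace_diagonal]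
    rw [traceNorm_eq_sum]
    push_cast
    apply Finset.sum_congr rfl
    intro j _
    by_cases h : sv X j = 0
    · simp [hd'def, h]
    · have : (sv X j : ℂ) ≠ 0 := by exact_mod_cast h
      field_simp [hd'def, h]
      simp [hd'def, h, this]

end LemB

-- Lemma C
lemma inner_self_re {n : ℕ} (u : EuclideanSpace ℂ (Fin n)) : (inner ℂ u u : ℂ).re = ‖u‖ ^ 2 :=
  inner_self_eq_norm_sq (𝕜 := ℂ) u

lemma sum_conj_bound {n k : ℕ} (C V : Fin k → Mat n)
    (hC : ∑ i, (C i)ᴴ * C i = 1)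
    (hV : ∀ i (u : EuclideanSpace ℂ (Fin n)), ‖Matrix.toEuclideanCLM (𝕜 := ℂ) (V i) u‖ ≤ ‖u‖) :
    ∀ u : EuclideanSpace ℂ (Fin n),
      ‖Matrix.toEuclideanCLM (𝕜 := ℂ) (∑ i, (C i)ᴴ * V i * C i) u‖ ≤ ‖u‖ := by
  intro x
  set TC : Fin k → (EuclideanSpace ℂ (Fin n) →L[ℂ] EuclideanSpace ℂ (Fin n)) :=
    fun i => Matrix.toEuclideanCLM (𝕜 := ℂ) (C i) with hTC
  set TV : Fin k → (EuclideanSpace ℂ (Fin n) →L[ℂ] EuclideanSpace ℂ (Fin n)) :=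
    fun i => Matrix.toEuclideanCLM (𝕜 := ℂ) (V i) with hTV
  have hTapp : ∀ y : EuclideanSpace ℂ (Fin n),
      Matrix.toEuclideanCLM (𝕜 := ℂ) (∑ i, (C i)ᴴ * V i * C i) y
        = ∑ i, ContinuousLinearMap.adjoint (TC i) (TV i (TC i y)) := by
    intro y
    rw [_root_.map_sum]
    rw [ContinuousLinearMap.sum_apply]
    apply Finset.sum_congr rfl
    intro i _
    rw [_root_.map_mul, _root_.map_mul, clm_conjTranspose]
    rfl
  -- key: sum of squared norms
  have K : ∀ y : EuclideanSpace ℂ (Fin n), ∑ i, ‖TC i y‖ ^ 2 = ‖y‖ ^ 2 := by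
    intro y
    have h1 : ∀ i, ‖TC i y‖ ^ 2
        = (inner ℂ (Matrix.toEuclideanCLM (𝕜 := ℂ) ((C i)ᴴ * C i) y) y : ℂ).re := by
      intro i
      rw [← inner_self_re (TC i y)]
      congr 1
      rw [_root_.map_mul, ContinuousLinearMap.mul_apply, clm_conjTranspose,
        ContinuousLinearMap.adjoint_inner_left]
    calc ∑ i, ‖TC i y‖ ^ 2
        = ∑ i, (inner ℂ (Matrix.toEuclideanCLM (𝕜 := ℂ) ((C i)ᴴ * C i) y) y : ℂ).re :=
          Finset.sum_congr rfl fun i _ => h1 i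
      _ = ((∑ i, (inner ℂ (Matrix.toEuclideanCLM (𝕜 := ℂ) ((C i)ᴴ * C i) y) y : ℂ))).re := by
          rw [Complex.re_sum]
      _ = (inner ℂ (Matrix.toEuclideanCLM (𝕜 := ℂ) (∑ i, (C i)ᴴ * C i) y) y : ℂ).re := by
          rw [_root_.map_sum, ContinuousLinearMap.sum_apply, sum_inner]
      _ = ‖y‖ ^ 2 := by rw [hC, _root_.map_one, ContinuousLinearMap.one_apply, inner_self_re]
  set a : EuclideanSpace ℂ (Fin n) := Matrix.toEuclideanCLM (𝕜 := ℂ) (∑ i, (C i)ᴴ * V i * C i) x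
    with ha
  refine sq_le_helper (norm_nonneg _) (norm_nonneg _) ?_
  have h2' : (inner ℂ a a : ℂ) = ∑ i, inner ℂ (TC i a) (TV i (TC i x)) := by
    nth_rewrite 2 [ha]
    rw [hTapp x, inner_sum]
    exact Finset.sum_congr rfl fun i _ => ContinuousLinearMap.adjoint_inner_right _ _ _
  have h2 : ‖a‖ ^ 2 = ∑ i, (inner ℂ (TC i a) (TV i (TC i x)) : ℂ).re := by
    rw [← inner_self_re a, h2', Complex.re_sum]
  rw [h2]
  have h3 : ∑ i, (inner ℂ (TC i a) (TV i (TC i x)) : ℂ).re ≤ ∑ i, ‖TC i a‖ * ‖TC i x‖ := by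
    refine Finset.sum_le_sum ?_
    intro i _
    calc (inner ℂ (TC i a) (TV i (TC i x)) : ℂ).re
        ≤ ‖(inner ℂ (TC i a) (TV i (TC i x)) : ℂ)‖ := Complex.re_le_norm _
      _ ≤ ‖TC i a‖ * ‖TV i (TC i x)‖ := norm_inner_le_norm _ _
      _ ≤ ‖TC i a‖ * ‖TC i x‖ :=
          mul_le_mul_of_nonneg_left (hV i _) (norm_nonneg _)
  refine le_trans h3 ?_
  have h4 : (∑ i, ‖TC i a‖ * ‖TC i x‖) ^ 2 ≤ (‖a‖ * ‖x‖) ^ 2 := by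
    calc (∑ i, ‖TC i a‖ * ‖TC i x‖) ^ 2
        ≤ (∑ i, ‖TC i a‖ ^ 2) * (∑ i, ‖TC i x‖ ^ 2) :=
          Finset.sum_mul_sq_le_sq_mul_sq _ _ _
      _ = ‖a‖ ^ 2 * ‖x‖ ^ 2 := by rw [K, K]
      _ = (‖a‖ * ‖x‖) ^ 2 := by ring
  exact sq_le_sq_helper (Finset.sum_nonneg fun i _ => mul_nonneg (norm_nonneg _) (norm_nonneg _))
    (mul_nonneg (norm_nonneg _) (norm_nonneg _)) h4

theorem traceNorm_isLNorm {n : ℕ} : IsLNorm (traceNorm (n := n)) := by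
  intro k C X hC
  choose V hVbd hVtr using fun i => exists_dual (C i * X * (C i)ᴴ)
  have hcyc : ∀ i, (V i * (C i * X * (C i)ᴴ)).trace = (((C i)ᴴ * V i * C i) * X).trace := by
    intro i
    calc (V i * (C i * X * (C i)ᴴ)).trace
        = ((V i * C i * X) * (C i)ᴴ).trace := by simp only [Matrix.mul_assoc]
      _ = ((C i)ᴴ * (V i * C i * X)).trace := Matrix.trace_mul_comm _ _
      _ = (((C i)ᴴ * V i * C i) * X).trace := by simp only [Matrix.mul_assoc]
  have hsum : ∑ i, traceNorm (C i * X * (C i)ᴴ)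
      = (((∑ i, (C i)ᴴ * V i * C i) * X).trace).re := by
    have h1 : ∀ i, traceNorm (C i * X * (C i)ᴴ) = ((((C i)ᴴ * V i * C i) * X).trace).re := by
      intro i
      rw [← hcyc i, hVtr i, Complex.ofReal_re]
    rw [Finset.sum_congr rfl fun i _ => h1 i, ← Complex.re_sum, ← Matrix.trace_sum,
      ← Finset.sum_mul]
  rw [hsum]
  calc (((∑ i, (C i)ᴴ * V i * C i) * X).trace).re
      ≤ ‖((∑ i, (C i)ᴴ * V i * C i) * X).trace‖ := Complex.re_le_norm _
    _ ≤ traceNorm X := abs_trace_le X _ (sum_conj_bound C V hC hVbd)
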